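/- If Δ′ is a j-dimensional Cohen–Macaulay simplicial complex, then its codimension-one skeleton Skel_{j−1}(Δ′) is 2-CM. Consequently, if Δ′ is a q-CM j-dimensional complex, then Skel_{j−1}(Δ′) is (q+1)-CM. -/

import Mathlib

open scoped Classical

namespace MultConj

variable {n : ℕ}

/-- `K` is (the set of faces of) an abstract simplicial complex on the
vertex set `Fin n`: it contains the empty face and is closed under subsets. -/
def IsComplex (K : Finset (Finset (Fin n))) : Prop :=
  ∅ ∈ K ∧ ∀ F ∈ K, ∀ G ⊆ F, G ∈ K

/-- The induced subcomplex `Δ_W` on a vertex set `W`. -/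
def induced (K : Finset (Finset (Fin n))) (W : Finset (Fin n)) :
    Finset (Finset (Fin n)) :=
  K.filter fun F => F ⊆ W

/-- The link of a face `F`. -/
def link (K : Finset (Finset (Fin n))) (F : Finset (Fin n)) :
    Finset (Finset (Fin n)) :=
  K.filter fun G => F ∩ G = ∅ ∧ F ∪ G ∈ K

/-- The `i`-skeleton: all faces of dimension at most `i`,
i.e. with at most `i+1` vertices. -/
def skel (K : Finset (Finset (Fin n))) (i : ℕ) : Finset (Finset (Fin n)) :=
  K.filter fun F => F.card ≤ i + 1

/-- The number of faces with `j` vertices, i.e. `f_{j-1}(K)`. -/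
def fcount (K : Finset (Finset (Fin n))) (j : ℕ) : ℕ :=
  (K.filter fun F => F.card = j).card

/-- The dimension of `K`, as an integer. -/
noncomputable def dimOf (K : Finset (Finset (Fin n))) : ℤ :=
  ((K.sup fun F => F.card : ℕ) : ℤ) - 1

variable (k : Type) [Field k]

/-- Simplicial chains supported on the faces of `K` having `j` vertices
(that is, `(j-1)`-dimensional chains), with coefficients in `k`. -/
abbrev chain (K : Finset (Finset (Fin n))) (j : ℕ) : Type :=
  {F : Finset (Fin n) // F ∈ K ∧ F.card = j} → k

/-- The simplicial boundary operator (with the standard orientation coming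
from the linear order on the vertices), viewed as landing in the space of
all functions on finsets. -/
noncomputable def bdry (K : Finset (Finset (Fin n))) (j : ℕ)
    (c : chain k K j) : Finset (Fin n) → k :=
  fun G => ∑ v : Fin n,
    if h : v ∉ G ∧ insert v G ∈ K ∧ (insert v G).card = j then
      (-1 : k) ^ (G.filter fun w => w < v).card * c ⟨insert v G, h.2⟩
    else 0

/-- Extension of a chain by zero to a function on all finsets. -/
def ext (K : Finset (Finset (Fin n))) (j : ℕ) (c : chain k K j) :
    Finset (Fin n) → k :=
  fun F => if h : F ∈ K ∧ F.card = j then c ⟨F, h⟩ else 0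

/-- `H̃_p(K; k) ≠ 0`: there is a reduced `p`-cycle which is not a boundary.
(For `p ≤ -2` this is false, as there is no `j : ℕ` with `j = p + 1`.) -/
def homNonzero (K : Finset (Finset (Fin n))) (p : ℤ) : Prop :=
  ∃ j : ℕ, (j : ℤ) = p + 1 ∧
    ∃ c : chain k K j, bdry k K j c = 0 ∧
      ∀ b : chain k K (j + 1), bdry k K (j + 1) b ≠ ext k K j c

/-- `H̃_p(K; k) ≅ k`: there is a reduced `p`-cycle `z` which is not a
boundary, and modulo boundaries every `p`-cycle is a multiple of `z`. -/
def homIsK (K : Finset (Finset (Fin n))) (p : ℤ) : Prop :=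
  ∃ j : ℕ, (j : ℤ) = p + 1 ∧
    ∃ z : chain k K j, bdry k K j z = 0 ∧
      (∀ b : chain k K (j + 1), bdry k K (j + 1) b ≠ ext k K j z) ∧
      ∀ c : chain k K j, bdry k K j c = 0 →
        ∃ a : k, ∃ b : chain k K (j + 1),
          bdry k K (j + 1) b = ext k K j (c - a • z)

/-- Cohen–Macaulayness of `K` over `k`, via Reisner's criterion:
`H̃_i(lk F; k) = 0` for every face `F` and every `i < dim K - |F|`. -/
def IsCM (K : Finset (Finset (Fin n))) : Prop :=
  ∀ F ∈ K, ∀ i : ℤ, i < dimOf K - F.card → ¬ homNonzero k (link K F) i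

/-- `K` is `q`-Cohen–Macaulay over `k`: removing any at most `q - 1`
vertices leaves a Cohen–Macaulay complex of the same dimension. -/
def IsQCM (q : ℕ) (K : Finset (Finset (Fin n))) : Prop :=
  ∀ U : Finset (Fin n), U.card ≤ q - 1 →
    IsCM k (induced K Uᶜ) ∧ dimOf (induced K Uᶜ) = dimOf K

/-- `q(K)`: the largest `q` for which `K` is `q`-CM over `k`. -/
noncomputable def qConn (K : Finset (Finset (Fin n))) : ℕ :=
  sSup {q : ℕ | IsQCM k q K}

/-- The CM-connectivity sequence: `q_i = q(Skel_i K)`. -/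
noncomputable def qSeq (K : Finset (Finset (Fin n))) (i : ℕ) : ℕ :=
  qConn k (skel K i)

/-- The minimal shifts `m_i` in the minimal free resolution of the face ring,
via Hochster's formula. -/
noncomputable def mshift (K : Finset (Finset (Fin n))) (i : ℕ) : ℕ :=
  sInf {m : ℕ | ∃ W : Finset (Fin n), W.card = m ∧
    homNonzero k (induced K W) ((W.card : ℤ) - i - 1)}

/-- The maximal shifts `M_i` in the minimal free resolution of the face ring,
via Hochster's formula. -/
noncomputable def Mshift (K : Finset (Finset (Fin n))) (i : ℕ) : ℕ :=
  sSup {m : ℕ | ∃ W : Finset (Fin n), W.card = m ∧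
    homNonzero k (induced K W) ((W.card : ℤ) - i - 1)}

/-- `K` is pure: every maximal face has cardinality `dim K + 1`. -/
def IsPure (K : Finset (Finset (Fin n))) : Prop :=
  ∀ F ∈ K, (∀ G ∈ K, F ⊆ G → G = F) → (F.card : ℤ) = dimOf K + 1

/-- `K` is connected: any two vertices are joined by a path of edges. -/
def Connected (K : Finset (Finset (Fin n))) : Prop :=
  ∀ u v : Fin n, {u} ∈ K → {v} ∈ K →
    Relation.ReflTransGen (fun a b => ({a, b} : Finset (Fin n)) ∈ K) u v

/-- `K` is Gorenstein* over `k`; by Stanley's topological characterization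
this means that `K` is a `k`-homology sphere: for every face `F` the link of
`F` has vanishing reduced homology below dimension `dim K - |F|` and reduced
homology isomorphic to `k` in dimension `dim K - |F|`. -/
def IsGorensteinStar (K : Finset (Finset (Fin n))) : Prop :=
  IsComplex K ∧
  (∀ F ∈ K, ∀ i : ℤ, i < dimOf K - F.card → ¬ homNonzero k (link K F) i) ∧
  (∀ F ∈ K, homIsK k (link K F) (dimOf K - F.card))


/-! ### Auxiliary machinery for the proof -/

/-- The global simplicial boundary operator on all functions on finsets. -/
noncomputable def Dop (z : Finset (Fin n) → k) : Finset (Fin n) → k :=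
  fun G => ∑ w : Fin n,
    if w ∈ G then 0 else (-1 : k) ^ (G.filter fun x => x < w).card * z (insert w G)

lemma Dop_apply (z : Finset (Fin n) → k) (G : Finset (Fin n)) :
    Dop k z G = ∑ w : Fin n,
      if w ∈ G then 0 else (-1 : k) ^ (G.filter fun x => x < w).card * z (insert w G) := rfl

/-- The cone operator with apex `v`. -/
noncomputable def iop (v : Fin n) (z : Finset (Fin n) → k) : Finset (Fin n) → k :=
  fun G => if v ∈ G then
      (-1 : k) ^ ((G.erase v).filter fun x => x < v).card * z (G.erase v)
    else 0

lemma iop_apply (v : Fin n) (z : Finset (Fin n) → k) (G : Finset (Fin n)) :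
    iop k v z G = if v ∈ G then
      (-1 : k) ^ ((G.erase v).filter fun x => x < v).card * z (G.erase v)
    else 0 := rfl

/-- The contraction operator at `v`. -/
noncomputable def rop (v : Fin n) (z : Finset (Fin n) → k) : Finset (Fin n) → k :=
  fun G => if v ∈ G then 0 else
      (-1 : k) ^ (G.filter fun x => x < v).card * z (insert v G)

lemma rop_apply (v : Fin n) (z : Finset (Fin n) → k) (G : Finset (Fin n)) :
    rop k v z G = if v ∈ G then 0 else
      (-1 : k) ^ (G.filter fun x => x < v).card * z (insert v G) := rfl

lemma bdry_eq_Dop (K : Finset (Finset (Fin n))) (jj : ℕ) (c : chain k K jj) :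
    bdry k K jj c = Dop k (ext k K jj c) := by
  funext G
  simp only [bdry, Dop, ext]
  apply Finset.sum_congr rfl
  intro w _
  by_cases hw : w ∈ G
  · rw [if_pos hw, dif_neg (by simp [hw])]
  · rw [if_neg hw]
    by_cases h2 : insert w G ∈ K ∧ (insert w G).card = jj
    · rw [dif_pos ⟨hw, h2⟩, dif_pos h2]
    · rw [dif_neg (by tauto), dif_neg h2, mul_zero]

lemma Dop_add (f g : Finset (Fin n) → k) (G : Finset (Fin n)) :
    Dop k (fun H => f H + g H) G = Dop k f G + Dop k g G := by
  simp only [Dop_apply]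
  rw [← Finset.sum_add_distrib]
  apply Finset.sum_congr rfl
  intro w _
  by_cases hw : w ∈ G
  · simp [hw]
  · simp only [if_neg hw]
    ring

lemma sign_sq (a : ℕ) : (-1 : k) ^ a * (-1 : k) ^ a = 1 := by
  rw [← mul_pow]; norm_num

lemma eps_insert {a w : Fin n} {S : Finset (Fin n)} (ha : a ∉ S) :
    ((insert a S).filter fun x => x < w).card
      = (S.filter fun x => x < w).card + (if a < w then 1 else 0) := by
  rw [Finset.filter_insert]
  split_ifs with h
  · rw [Finset.card_insert_of_notMem (fun hc => ha (Finset.mem_filter.1 hc).1)]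
  · rw [add_zero]

lemma key_homotopy (v : Fin n) (z : Finset (Fin n) → k) (G : Finset (Fin n)) :
    Dop k (iop k v z) G + iop k v (Dop k z) G = z G := by
  by_cases hv : v ∈ G
  · have hG : insert v (G.erase v) = G := Finset.insert_erase hv
    have hvG' : v ∉ G.erase v := Finset.notMem_erase v G
    simp only [Dop_apply, iop_apply, if_pos hv]
    rw [Finset.mul_sum, ← Finset.sum_add_distrib,
      show z G = ∑ w : Fin n, if w = v then z G else 0 by
        rw [Finset.sum_ite_eq' Finset.univ v fun _ => z G, if_pos (Finset.mem_univ v)]]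
    apply Finset.sum_congr rfl
    intro w _
    by_cases hwv : w = v
    · subst hwv
      rw [if_pos rfl, if_pos hv, if_neg hvG', hG, zero_add, ← mul_assoc, sign_sq, one_mul]
    · rw [if_neg hwv]
      by_cases hw : w ∈ G
      · rw [if_pos hw, if_pos (Finset.mem_erase.2 ⟨hwv, hw⟩), mul_zero, add_zero]
      · have hwG' : w ∉ G.erase v := fun hc => hw (Finset.mem_of_mem_erase hc)
        rw [if_neg hw, if_pos (Finset.mem_insert_of_mem hv), if_neg hwG',
          Finset.erase_insert_of_ne hwv]
        have e1 : (G.filter fun x => x < w).card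
            = ((G.erase v).filter fun x => x < w).card + (if v < w then 1 else 0) := by
          conv_lhs => rw [← hG]
          exact eps_insert hvG'
        have e2 : ((insert w (G.erase v)).filter fun x => x < v).card
            = ((G.erase v).filter fun x => x < v).card + (if w < v then 1 else 0) :=
          eps_insert hwG'
        rw [e1, e2, pow_add, pow_add]
        have hone : (if v < w then 1 else 0) + (if w < v then 1 else 0) = 1 := by
          rcases lt_trichotomy v w with h | h | h
          · rw [if_pos h, if_neg (asymm h)]
          · exact absurd h.symm hwv
          · rw [if_neg (asymm h), if_pos h]
        have hst : (-1 : k) ^ (if v < w then 1 else 0) * (-1 : k) ^ (if w < v then 1 else 0)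
            = -1 := by rw [← pow_add, hone, pow_one]
        linear_combination ((-1 : k) ^ ((G.erase v).filter fun x => x < w).card *
          (-1 : k) ^ ((G.erase v).filter fun x => x < v).card * z (insert w (G.erase v))) * hst
  · simp only [Dop_apply, iop_apply, if_neg hv, add_zero]
    rw [show z G = ∑ w : Fin n, if w = v then z G else 0 by
        rw [Finset.sum_ite_eq' Finset.univ v fun _ => z G, if_pos (Finset.mem_univ v)]]
    apply Finset.sum_congr rfl
    intro w _
    by_cases hwv : w = v
    · subst hwv
      rw [if_pos rfl, if_neg hv, if_pos (Finset.mem_insert_self w G), Finset.erase_insert hv,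
        ← mul_assoc, sign_sq, one_mul]
    · rw [if_neg hwv]
      by_cases hw : w ∈ G
      · rw [if_pos hw]
      · have : v ∉ insert w G := by
          intro hc
          rcases Finset.mem_insert.1 hc with h | h
          · exact hwv h.symm
          · exact hv h
        rw [if_neg hw, if_neg this, mul_zero]

lemma iop_rop (v : Fin n) (y : Finset (Fin n) → k) (G : Finset (Fin n)) :
    iop k v (rop k v y) G = if v ∈ G then y G else 0 := by
  simp only [iop_apply, rop_apply]
  by_cases hv : v ∈ G
  · rw [if_pos hv, if_pos hv, if_neg (Finset.notMem_erase v G), Finset.insert_erase hv,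
      ← mul_assoc, sign_sq, one_mul]
  · rw [if_neg hv, if_neg hv]

lemma cmfill {K : Finset (Finset (Fin n))} {j : ℕ}
    (hCM : IsCM k K) (hdim : dimOf K = (j : ℤ))
    (F : Finset (Fin n)) (hF : F ∈ K) (m : ℕ)
    (hm : (m : ℤ) - 1 < (j : ℤ) - F.card)
    (x : Finset (Fin n) → k)
    (hsupp : ∀ G, x G ≠ 0 → G ∈ link K F ∧ G.card = m)
    (hcyc : Dop k x = 0) :
    ∃ y : Finset (Fin n) → k,
      (∀ G, y G ≠ 0 → G ∈ link K F ∧ G.card = m + 1) ∧ Dop k y = x := by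
  have hx : ext k (link K F) m (fun p => x p.1) = x := by
    funext G
    simp only [ext]
    split_ifs with h
    · rfl
    · by_contra hne
      have hxG : x G ≠ 0 := fun h' => hne h'.symm
      exact h ⟨(hsupp G hxG).1, (hsupp G hxG).2⟩
  have hb0 : bdry k (link K F) m (fun p => x p.1) = 0 := by
    rw [bdry_eq_Dop, hx, hcyc]
  have hex : ∃ b : chain k (link K F) (m + 1),
      bdry k (link K F) (m + 1) b = ext k (link K F) m (fun p => x p.1) := by
    by_contra hno
    push_neg at hno
    exact hCM F hF ((m : ℤ) - 1) (by rw [hdim]; exact hm)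
      ⟨m, by ring, fun p => x p.1, hb0, hno⟩
  obtain ⟨b, hb⟩ := hex
  refine ⟨ext k (link K F) (m + 1) b, ?_, ?_⟩
  · intro G hG
    simp only [ext] at hG
    split_ifs at hG with h
    · exact h
    · exact absurd rfl hG
  · rw [← bdry_eq_Dop, hb, hx]

lemma fill {K : Finset (Finset (Fin n))} {j : ℕ}
    (hK : IsComplex K) (hCM : IsCM k K) (hdim : dimOf K = (j : ℤ))
    (F : Finset (Fin n)) (hF : F ∈ K) (W : Finset (Fin n)) (hFW : F ⊆ W)
    (hW : Wᶜ.card ≤ 1) (m : ℕ) (hm : (m : ℤ) + F.card ≤ (j : ℤ) - 1)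
    (x : Finset (Fin n) → k)
    (hsupp : ∀ G, x G ≠ 0 → G ∈ link K F ∧ G.card = m ∧ G ⊆ W)
    (hcyc : Dop k x = 0) :
    ∃ y : Finset (Fin n) → k,
      (∀ G, y G ≠ 0 → G ∈ link K F ∧ G.card = m + 1 ∧ G ⊆ W) ∧ Dop k y = x := by
  obtain ⟨y, hy, hDy⟩ := cmfill k hCM hdim F hF m (by omega) x
    (fun G h => ⟨(hsupp G h).1, (hsupp G h).2.1⟩) hcyc
  rcases Nat.lt_or_ge Wᶜ.card 1 with h0 | h1
  · have hWc : Wᶜ = ∅ := Finset.card_eq_zero.1 (by omega)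
    have hall : ∀ G : Finset (Fin n), G ⊆ W := by
      intro G a ha
      by_contra haW
      have hmem : a ∈ Wᶜ := Finset.mem_compl.2 haW
      rw [hWc] at hmem
      exact absurd hmem (Finset.notMem_empty a)
    exact ⟨y, fun G hG => ⟨(hy G hG).1, (hy G hG).2, hall G⟩, hDy⟩
  · have hWc1 : Wᶜ.card = 1 := le_antisymm hW h1
    obtain ⟨v, hv⟩ := Finset.card_eq_one.1 hWc1
    have hmemW : ∀ G : Finset (Fin n), G ⊆ W ↔ v ∉ G := by
      intro G
      constructor
      · intro h hvG
        have h1 : v ∈ W := h hvG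
        have h2 : v ∈ Wᶜ := by rw [hv]; exact Finset.mem_singleton_self v
        exact (Finset.mem_compl.1 h2) h1
      · intro hvG a ha
        by_contra haW
        have hmem : a ∈ Wᶜ := Finset.mem_compl.2 haW
        rw [hv, Finset.mem_singleton] at hmem
        exact hvG (hmem ▸ ha)
    have hvF : v ∉ F := fun h => (hmemW F).1 hFW h
    set b₁ : Finset (Fin n) → k := rop k v y with hb₁def
    set y₀ : Finset (Fin n) → k := (fun G => if v ∈ G then 0 else y G) with hy₀def
    have hy₀v : ∀ G : Finset (Fin n), v ∈ G → y₀ G = 0 := by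
      intro G h; rw [hy₀def]; exact if_pos h
    have hb₁v : ∀ G : Finset (Fin n), v ∈ G → b₁ G = 0 := by
      intro G h; rw [hb₁def, rop_apply]; exact if_pos h
    have hyd : y = fun G => y₀ G + iop k v b₁ G := by
      funext G
      rw [hb₁def, iop_rop, hy₀def]
      by_cases hvG : v ∈ G
      · simp [hvG]
      · simp [hvG]
    have hDsplit : ∀ G : Finset (Fin n),
        Dop k y G = Dop k y₀ G + Dop k (iop k v b₁) G := by
      intro G
      conv_lhs => rw [hyd]
      exact Dop_add k y₀ (iop k v b₁) G
    have hDy0 : ∀ G : Finset (Fin n), v ∈ G → Dop k y₀ G = 0 := by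
      intro G hvG
      rw [Dop_apply]
      apply Finset.sum_eq_zero
      intro w _
      by_cases hw : w ∈ G
      · rw [if_pos hw]
      · rw [if_neg hw, hy₀v (insert w G) (Finset.mem_insert_of_mem hvG), mul_zero]
    have hDb₁ : Dop k b₁ = 0 := by
      funext G
      show Dop k b₁ G = 0
      by_cases hvG : v ∈ G
      · rw [Dop_apply]
        apply Finset.sum_eq_zero
        intro w _
        by_cases hw : w ∈ G
        · rw [if_pos hw]
        · rw [if_neg hw, hb₁v (insert w G) (Finset.mem_insert_of_mem hvG), mul_zero]
      · have hx0 : x (insert v G) = 0 := by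
          by_contra hne
          have h3 := (hsupp _ hne).2.2
          rw [hmemW] at h3
          exact h3 (Finset.mem_insert_self v G)
        have h1 : Dop k y (insert v G) = 0 := by rw [hDy]; exact hx0
        rw [hDsplit, hDy0 _ (Finset.mem_insert_self v G), zero_add] at h1
        have h2 := key_homotopy k v b₁ (insert v G)
        rw [h1, hb₁v _ (Finset.mem_insert_self v G), zero_add] at h2
        rw [iop_apply, if_pos (Finset.mem_insert_self v G), Finset.erase_insert hvG] at h2
        rcases mul_eq_zero.1 h2 with h | h
        · exact absurd h (pow_ne_zero _ (by norm_num))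
        · exact h
    by_cases hb₁0 : ∀ G, b₁ G = 0
    · refine ⟨y₀, ?_, ?_⟩
      · intro G hG
        have hvG : v ∉ G := by
          intro hvG
          exact hG (hy₀v G hvG)
        have hyG : y G ≠ 0 := by
          intro h
          apply hG
          rw [hy₀def]
          simp [hvG, h]
        exact ⟨(hy G hyG).1, (hy G hyG).2, (hmemW G).2 hvG⟩
      · have hiz : ∀ H, iop k v b₁ H = 0 := by
          intro H
          rw [iop_apply]
          split_ifs with h
          · rw [hb₁0, mul_zero]
          · rfl
        have h5 : ∀ H, (if v ∈ H then y H else 0) = 0 := by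
          intro H
          rw [← iop_rop k v y H, ← hb₁def]
          exact hiz H
        have hyy : y₀ = y := by
          funext G
          simp only [hy₀def]
          have h6 := h5 G
          by_cases h : v ∈ G
          · rw [if_pos h] at h6
            rw [if_pos h]
            exact h6.symm
          · rw [if_neg h]
        rw [hyy]
        exact hDy
    · push_neg at hb₁0
      obtain ⟨G₀, hG₀⟩ := hb₁0
      have hstep : ∀ G : Finset (Fin n), b₁ G ≠ 0 →
          v ∉ G ∧ insert v G ∈ link K F ∧ G.card = m := by
        intro G hG
        have hvG : v ∉ G := fun h => hG (hb₁v G h)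
        have hyiG : y (insert v G) ≠ 0 := by
          intro h
          apply hG
          rw [hb₁def, rop_apply, if_neg hvG, h, mul_zero]
        obtain ⟨hlink, hcard⟩ := hy _ hyiG
        have hGc : G.card = m := by
          have := Finset.card_insert_of_notMem hvG
          omega
        exact ⟨hvG, hlink, hGc⟩
      have hFvK : F ∪ {v} ∈ K := by
        obtain ⟨hvG₀, hlink₀, _⟩ := hstep G₀ hG₀
        have h2 := (Finset.mem_filter.1 hlink₀).2.2
        refine hK.2 _ h2 _ ?_
        intro a ha
        rcases Finset.mem_union.1 ha with h | h
        · exact Finset.mem_union_left _ h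
        · rw [Finset.mem_singleton] at h
          subst h
          exact Finset.mem_union_right _ (Finset.mem_insert_self _ _)
      have hcardFv : (F ∪ {v}).card = F.card + 1 := by
        rw [Finset.union_comm, ← Finset.insert_eq, Finset.card_insert_of_notMem hvF]
      have hsuppb₁ : ∀ G, b₁ G ≠ 0 → G ∈ link K (F ∪ {v}) ∧ G.card = m := by
        intro G hG
        obtain ⟨hvG, hlink, hcard⟩ := hstep G hG
        have hmem := Finset.mem_filter.1 hlink
        obtain ⟨hins_mem, hFint, hFun⟩ : insert v G ∈ K ∧ F ∩ insert v G = ∅ ∧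
            F ∪ insert v G ∈ K := ⟨hmem.1, hmem.2.1, hmem.2.2⟩
        refine ⟨Finset.mem_filter.2 ⟨hK.2 _ hins_mem G (Finset.subset_insert v G), ?_, ?_⟩, hcard⟩
        · apply Finset.eq_empty_iff_forall_notMem.2
          intro a ha
          have h1 := Finset.mem_inter.1 ha
          rcases Finset.mem_union.1 h1.1 with h | h
          · have hmem2 : a ∈ F ∩ insert v G :=
              Finset.mem_inter.2 ⟨h, Finset.mem_insert_of_mem h1.2⟩
            rw [hFint] at hmem2
            exact Finset.notMem_empty a hmem2
          · rw [Finset.mem_singleton] at h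
            subst h
            exact hvG h1.2
        · have heq : (F ∪ {v}) ∪ G = F ∪ insert v G := by
            rw [Finset.union_assoc, ← Finset.insert_eq]
          rw [heq]
          exact hFun
      obtain ⟨y₂, hy₂, hDy₂⟩ := cmfill k hCM hdim (F ∪ {v}) hFvK m
        (by rw [hcardFv]; push_cast; push_cast at hm; omega) b₁ hsuppb₁ hDb₁
      refine ⟨fun G => y₀ G + y₂ G, ?_, ?_⟩
      · intro G hG
        have hor : y₀ G ≠ 0 ∨ y₂ G ≠ 0 := by
          by_contra hc
          push_neg at hc
          exact hG (by show y₀ G + y₂ G = 0; rw [hc.1, hc.2, add_zero])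
        rcases hor with h | h
        · have hvG : v ∉ G := fun hvG => h (hy₀v G hvG)
          have hyG : y G ≠ 0 := by
            intro hh
            apply h
            rw [hy₀def]
            simp [hvG, hh]
          exact ⟨(hy G hyG).1, (hy G hyG).2, (hmemW G).2 hvG⟩
        · obtain ⟨hlink₂, hcard₂⟩ := hy₂ G h
          have hmem2 := Finset.mem_filter.1 hlink₂
          obtain ⟨hGK, hint₂, hun₂⟩ : G ∈ K ∧ (F ∪ {v}) ∩ G = ∅ ∧ (F ∪ {v}) ∪ G ∈ K :=
            ⟨hmem2.1, hmem2.2.1, hmem2.2.2⟩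
          have hvG : v ∉ G := by
            intro hvG
            have hm3 : v ∈ (F ∪ {v}) ∩ G := Finset.mem_inter.2
              ⟨Finset.mem_union_right _ (Finset.mem_singleton_self v), hvG⟩
            rw [hint₂] at hm3
            exact Finset.notMem_empty v hm3
          refine ⟨Finset.mem_filter.2 ⟨hGK, ?_, ?_⟩, hcard₂, (hmemW G).2 hvG⟩
          · apply Finset.eq_empty_iff_forall_notMem.2
            intro a ha
            have h1 := Finset.mem_inter.1 ha
            have hm4 : a ∈ (F ∪ {v}) ∩ G :=
              Finset.mem_inter.2 ⟨Finset.mem_union_left _ h1.1, h1.2⟩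
            rw [hint₂] at hm4
            exact Finset.notMem_empty a hm4
          · refine hK.2 _ hun₂ _ ?_
            intro a ha
            rcases Finset.mem_union.1 ha with h' | h'
            · exact Finset.mem_union_left _ (Finset.mem_union_left _ h')
            · exact Finset.mem_union_right _ h'
      · funext G
        show Dop k (fun H => y₀ H + y₂ H) G = x G
        rw [Dop_add]
        have h2 := key_homotopy k v b₁ G
        have h3 : iop k v (Dop k b₁) G = 0 := by
          rw [hDb₁, iop_apply]
          split_ifs with h
          · rw [Pi.zero_apply, mul_zero]
          · rfl
        rw [h3, add_zero] at h2
        have h4 : Dop k y₂ G = b₁ G := by rw [hDy₂]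
        rw [h4, ← h2, ← hDsplit G, hDy]

lemma MLU {K : Finset (Finset (Fin n))} {j : ℕ}
    (hK : IsComplex K) (hCM : IsCM k K) (hdim : dimOf K = (j : ℤ))
    (W : Finset (Fin n)) (hW : Wᶜ.card ≤ 1) :
    IsCM k ((K.filter fun F => F.card ≤ j).filter fun F => F ⊆ W) ∧
      dimOf ((K.filter fun F => F.card ≤ j).filter fun F => F ⊆ W) = (j : ℤ) - 1 := by
  set T := (K.filter fun F => F.card ≤ j).filter fun F => F ⊆ W with hT
  have hmemT : ∀ F : Finset (Fin n), F ∈ T ↔ (F ∈ K ∧ F.card ≤ j ∧ F ⊆ W) := by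
    intro F
    rw [hT]
    constructor
    · intro h
      have h1 := Finset.mem_filter.1 h
      have h2 := Finset.mem_filter.1 h1.1
      exact ⟨h2.1, h2.2, h1.2⟩
    · intro h
      exact Finset.mem_filter.2 ⟨Finset.mem_filter.2 ⟨h.1, h.2.1⟩, h.2.2⟩
  have hKsup : K.sup (fun F => F.card) = j + 1 := by
    have h1 : ((K.sup fun F => F.card : ℕ) : ℤ) - 1 = (j : ℤ) := hdim
    omega
  obtain ⟨F₀, hF₀K, hF₀sup⟩ := Finset.exists_mem_eq_sup K ⟨∅, hK.1⟩ (fun F => F.card)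
  have hF₀card : F₀.card = j + 1 := by rw [hF₀sup] at hKsup; exact hKsup
  have hsub : F₀ ⊆ (F₀ ∩ W) ∪ Wᶜ := by
    intro a ha
    by_cases h : a ∈ W
    · exact Finset.mem_union_left _ (Finset.mem_inter.2 ⟨ha, h⟩)
    · exact Finset.mem_union_right _ (Finset.mem_compl.2 h)
  have hcardle : j ≤ (F₀ ∩ W).card := by
    have h1 := Finset.card_le_card hsub
    have h2 := Finset.card_union_le (F₀ ∩ W) Wᶜ
    omega
  obtain ⟨G₀, hG₀sub, hG₀card⟩ := Finset.exists_subset_card_eq hcardle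
  have hG₀T : G₀ ∈ T := (hmemT G₀).2
    ⟨hK.2 F₀ hF₀K G₀ (hG₀sub.trans Finset.inter_subset_left), le_of_eq hG₀card,
      hG₀sub.trans Finset.inter_subset_right⟩
  have hTsup : T.sup (fun F => F.card) = j := by
    apply le_antisymm
    · apply Finset.sup_le
      intro F hF
      exact ((hmemT F).1 hF).2.1
    · have h1 : G₀.card ≤ T.sup (fun F : Finset (Fin n) => F.card) :=
        Finset.le_sup (f := fun F : Finset (Fin n) => F.card) hG₀T
      omega
  have hdimT : dimOf T = (j : ℤ) - 1 := by
    unfold dimOf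
    rw [hTsup]
  refine ⟨?_, hdimT⟩
  intro F hF i hi hhom
  obtain ⟨hFK, hFcard, hFW⟩ := (hmemT F).1 hF
  obtain ⟨m, hmi, c, hc0, hnb⟩ := hhom
  rw [hdimT] at hi
  have hmb : (m : ℤ) + F.card ≤ (j : ℤ) - 1 := by omega
  have hsupp : ∀ G, ext k (link T F) m c G ≠ 0 → G ∈ link K F ∧ G.card = m ∧ G ⊆ W := by
    intro G hG
    simp only [ext] at hG
    split_ifs at hG with h
    · obtain ⟨hGl, hGc⟩ := h
      have hmem := Finset.mem_filter.1 hGl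
      obtain ⟨hGT, hGint, hGun⟩ : G ∈ T ∧ F ∩ G = ∅ ∧ F ∪ G ∈ T :=
        ⟨hmem.1, hmem.2.1, hmem.2.2⟩
      obtain ⟨hGK, _, hGW⟩ := (hmemT G).1 hGT
      exact ⟨Finset.mem_filter.2 ⟨hGK, hGint, ((hmemT (F ∪ G)).1 hGun).1⟩, hGc, hGW⟩
    · exact absurd rfl hG
  have hcyc : Dop k (ext k (link T F) m c) = 0 := by
    rw [← bdry_eq_Dop, hc0]
  obtain ⟨Y, hYsupp, hYD⟩ := fill k hK hCM hdim F hFK W hFW hW m hmb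
    (ext k (link T F) m c) hsupp hcyc
  have hextb : ext k (link T F) (m + 1) (fun p => Y p.1) = Y := by
    funext G
    simp only [ext]
    split_ifs with h
    · rfl
    · by_contra hne
      have hYG : Y G ≠ 0 := fun hh => hne hh.symm
      obtain ⟨hGl, hGc, hGW⟩ := hYsupp G hYG
      have hmem := Finset.mem_filter.1 hGl
      obtain ⟨hGK, hGint, hGun⟩ : G ∈ K ∧ F ∩ G = ∅ ∧ F ∪ G ∈ K :=
        ⟨hmem.1, hmem.2.1, hmem.2.2⟩
      apply h
      refine ⟨Finset.mem_filter.2 ⟨(hmemT G).2 ⟨hGK, by omega, hGW⟩, hGint,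
        (hmemT (F ∪ G)).2 ⟨hGun, ?_, Finset.union_subset hFW hGW⟩⟩, hGc⟩
      have hdisj : Disjoint F G := Finset.disjoint_iff_inter_eq_empty.2 hGint
      rw [Finset.card_union_of_disjoint hdisj]
      omega
  exact hnb (fun p => Y p.1) (by rw [bdry_eq_Dop, hextb, hYD])
/-- Proposition 3.2: the codimension-one skeleton (faces of dimension
`≤ j - 1`, i.e. with at most `j` vertices) of a `j`-dimensional CM complex is
2-CM; consequently the codimension-one skeleton of a `q`-CM `j`-dimensional
complex is `(q+1)`-CM. -/
theorem codim_one_skeleton_2CM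
    (n j : ℕ) (k : Type) [Field k] (K : Finset (Finset (Fin n)))
    (hK : IsComplex K) (hv : ∀ v : Fin n, {v} ∈ K)
    (hdim : dimOf K = (j : ℤ)) :
    (IsCM k K → IsQCM k 2 (K.filter fun F => F.card ≤ j)) ∧
    (∀ q : ℕ, IsQCM k q K → IsQCM k (q + 1) (K.filter fun F => F.card ≤ j)) := by
  have hid : (K.filter fun F => F.card ≤ j).filter
      (fun F => F ⊆ (∅ : Finset (Fin n))ᶜ) = K.filter fun F => F.card ≤ j :=
    Finset.filter_true_of_mem (fun F _ => by
      rw [Finset.compl_empty]; exact Finset.subset_univ F)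
  constructor
  · intro hCM U hU
    have hU1 : U.card ≤ 1 := by omega
    have h := MLU k hK hCM hdim Uᶜ (by rw [compl_compl]; exact hU1)
    have h0 := MLU k hK hCM hdim ((∅ : Finset (Fin n))ᶜ) (by rw [compl_compl]; simp)
    rw [hid] at h0
    have e : induced (K.filter fun F => F.card ≤ j) Uᶜ
        = (K.filter fun F => F.card ≤ j).filter fun F => F ⊆ Uᶜ := rfl
    constructor
    · rw [e]; exact h.1
    · rw [e, h.2]; exact h0.2.symm
  · intro q hq U hU
    have hCM : IsCM k K := by
      have h0 := hq ∅ (by simp)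
      have e : induced K (∅ : Finset (Fin n))ᶜ = K := by
        rw [show induced K (∅ : Finset (Fin n))ᶜ
            = K.filter fun F => F ⊆ (∅ : Finset (Fin n))ᶜ from rfl, Finset.compl_empty]
        exact Finset.filter_true_of_mem (fun F _ => Finset.subset_univ F)
      rw [e] at h0
      exact h0.1
    have h0 := MLU k hK hCM hdim ((∅ : Finset (Fin n))ᶜ) (by rw [compl_compl]; simp)
    rw [hid] at h0
    have hUq : U.card ≤ q := by omega
    by_cases hUe : U = ∅
    · subst hUe
      have h := MLU k hK hCM hdim ((∅ : Finset (Fin n))ᶜ) (by rw [compl_compl]; simp)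
      have e : induced (K.filter fun F => F.card ≤ j) (∅ : Finset (Fin n))ᶜ
          = (K.filter fun F => F.card ≤ j).filter
              fun F => F ⊆ (∅ : Finset (Fin n))ᶜ := rfl
      constructor
      · rw [e]; exact h.1
      · rw [e, h.2]; exact h0.2.symm
    · obtain ⟨v, hvU⟩ := Finset.nonempty_iff_ne_empty.2 hUe
      have hU'card : (U.erase v).card ≤ q - 1 := by
        have h1 := Finset.card_erase_of_mem hvU
        have h2 : 1 ≤ U.card := Finset.card_pos.2 ⟨v, hvU⟩
        omega
      obtain ⟨hCM', hdimK'⟩ := hq (U.erase v) hU'card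
      have hK' : IsComplex (induced K (U.erase v)ᶜ) := by
        constructor
        · exact Finset.mem_filter.2 ⟨hK.1, Finset.empty_subset _⟩
        · intro F hF G hGF
          have h1 := Finset.mem_filter.1 hF
          exact Finset.mem_filter.2 ⟨hK.2 F h1.1 G hGF, hGF.trans h1.2⟩
      have hdim' : dimOf (induced K (U.erase v)ᶜ) = (j : ℤ) := by rw [hdimK', hdim]
      have h := MLU k hK' hCM' hdim' (({v} : Finset (Fin n))ᶜ)
        (by rw [compl_compl, Finset.card_singleton])
      have hEq : ((induced K (U.erase v)ᶜ).filter fun F => F.card ≤ j).filter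
            (fun F => F ⊆ ({v} : Finset (Fin n))ᶜ)
          = (K.filter fun F => F.card ≤ j).filter fun F => F ⊆ Uᶜ := by
        ext A
        constructor
        · intro hA
          have h1 := Finset.mem_filter.1 hA
          have h2 := Finset.mem_filter.1 h1.1
          have h3 := Finset.mem_filter.1 h2.1
          refine Finset.mem_filter.2 ⟨Finset.mem_filter.2 ⟨h3.1, h2.2⟩, ?_⟩
          intro a ha
          rw [Finset.mem_compl]
          intro haU
          by_cases hav : a = v
          · subst hav
            have := h1.2 ha
            rw [Finset.mem_compl, Finset.mem_singleton] at this
            exact this rfl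
          · have := h3.2 ha
            rw [Finset.mem_compl, Finset.mem_erase] at this
            exact this ⟨hav, haU⟩
        · intro hA
          have h1 := Finset.mem_filter.1 hA
          have h2 := Finset.mem_filter.1 h1.1
          have hAU : ∀ a ∈ A, a ∉ U := by
            intro a ha
            have := h1.2 ha
            rwa [Finset.mem_compl] at this
          refine Finset.mem_filter.2 ⟨Finset.mem_filter.2
            ⟨Finset.mem_filter.2 ⟨h2.1, ?_⟩, h2.2⟩, ?_⟩
          · intro a ha
            rw [Finset.mem_compl, Finset.mem_erase]
            intro hc
            exact hAU a ha hc.2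
          · intro a ha
            rw [Finset.mem_compl, Finset.mem_singleton]
            intro hc
            subst hc
            exact hAU a ha hvU
      have e : induced (K.filter fun F => F.card ≤ j) Uᶜ
          = (K.filter fun F => F.card ≤ j).filter fun F => F ⊆ Uᶜ := rfl
      constructor
      · rw [e, ← hEq]; exact h.1
      · rw [e, ← hEq, h.2]; exact h0.2.symm

end MultConj
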